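/- arXiv:1710.02690 — 7 statements merged into one kernel-verified Lean document; each statement's English description precedes it below -/
import Mathlib

section
/- Let $G^*$ be a graph on $M$ vertices whose connected components are cliques, with $n_1^*$ singletons, $n_2^*$ cliques of size 2, $n_3^*$ cliques of size 3, and $n_i^*$ cliques of size $i$ for $i \ge 4$. Let $G'$ be obtained by independently retaining each edge of $G^*$ with probability $p \in (0,1]$, and assume every clique of size $\geq 4$ remains connected in $G'$. Let $n_i'$ be the number of connected components of size $i$ in $G'$. Then the estimator $\mathrm{LSHE} = n_1' + n_2' \cdot \frac{2p-1}{p} + n_3' \cdot \frac{1 - 6(1-p)^2 p}{p^2(3-2p)} + \sum_{i \ge 4} n_i'$ satisfies $\mathbb{E}[\mathrm{LSHE}] = \sum_i n_i^*$, i.e., it is an unbiased estimator of the number of connected components of $G^*$. -/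
section LSHEaux

lemma lshe_sum_prod_pi {n : ℕ} {α : Type*} [Fintype α] [DecidableEq α] (f : Fin n → α → ℝ) :
    ∑ x : Fin n → α, ∏ i, f i (x i) = ∏ i, ∑ a, f i a := by
  rw [Finset.prod_univ_sum]; rw [Fintype.piFinset_univ]

lemma lshe_exp_coord {n : ℕ} {α : Type*} [Fintype α] [DecidableEq α] (μ : α → ℝ)
    (hμ : ∑ a, μ a = 1) (g : α → ℝ) (i : Fin n) :
    ∑ x : Fin n → α, (∏ j, μ (x j)) * g (x i) = ∑ a, μ a * g a := by
  have h1 : ∀ x : Fin n → α,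
      (∏ j, μ (x j)) * g (x i) = ∏ j, (if j = i then μ (x j) * g (x j) else μ (x j)) := by
    intro x
    rw [← Finset.mul_prod_erase Finset.univ
        (fun j => if j = i then μ (x j) * g (x j) else μ (x j)) (Finset.mem_univ i),
        ← Finset.mul_prod_erase Finset.univ (fun j => μ (x j)) (Finset.mem_univ i)]
    simp only [if_pos rfl, if_true]
    rw [Finset.prod_congr rfl (fun j hj => if_neg (Finset.mem_erase.1 hj).1)]
    ring
  simp only [h1]
  rw [lshe_sum_prod_pi (fun j a => if j = i then μ a * g a else μ a)]
  rw [Finset.prod_eq_single i]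
  · simp
  · intro j _ hj
    simp [hj, hμ]
  · simp

lemma lshe_exp_count {n : ℕ} {α : Type*} [Fintype α] [DecidableEq α] (μ : α → ℝ)
    (hμ : ∑ a, μ a = 1) (P : α → Prop) [DecidablePred P] :
    ∑ x : Fin n → α, (∏ j, μ (x j)) * ((Finset.univ.filter (fun i => P (x i))).card : ℝ)
      = n * ∑ a, μ a * (if P a then 1 else 0) := by
  have hc : ∀ x : Fin n → α, ((Finset.univ.filter (fun i => P (x i))).card : ℝ)
      = ∑ i : Fin n, (if P (x i) then (1:ℝ) else 0) := by
    intro x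
    rw [Finset.card_filter]
    push_cast
    rfl
  simp only [hc, Finset.mul_sum]
  rw [Finset.sum_comm]
  rw [Finset.sum_congr rfl
    (fun i _ => lshe_exp_coord μ hμ (fun a => if P a then (1:ℝ) else 0) i)]
  rw [Finset.sum_const, Finset.card_univ, Fintype.card_fin, nsmul_eq_mul, Finset.mul_sum]

lemma lshe_sum_pi_succ {n : ℕ} {β : Type*} [Fintype β] (f : (Fin (n+1) → β) → ℝ) :
    ∑ x : Fin (n+1) → β, f x = ∑ b : β, ∑ y : Fin n → β, f (Fin.cons b y) := by
  rw [← Equiv.sum_comp (Fin.consEquiv (fun _ => β)) f, Fintype.sum_prod_type]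
  rfl

lemma lshe_sum_pi3 (f : (Fin 3 → Bool) → ℝ) :
    ∑ y : Fin 3 → Bool, f y = ∑ a : Bool, ∑ b : Bool, ∑ c : Bool, f ![a, b, c] := by
  rw [lshe_sum_pi_succ]
  refine Finset.sum_congr rfl fun a _ => ?_
  rw [lshe_sum_pi_succ]
  refine Finset.sum_congr rfl fun b _ => ?_
  rw [lshe_sum_pi_succ]
  refine Finset.sum_congr rfl fun c _ => ?_
  rw [Fintype.sum_unique]
  congr 1

end LSHEaux

/-- Unbiasedness of the LSHE estimator. The graph `G*` is a disjoint union of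
cliques: `n1` singletons, `n2` 2-cliques, `n3` 3-cliques, and `nstar i` cliques of
size `i` for `4 ≤ i ≤ M`. Each edge is retained independently with probability `p`,
and cliques of size ≥ 4 remain connected (so they contribute exactly
`∑_{i=4}^{M} nstar i` components of size ≥ 4 in every outcome). Then
`E[LSHE] = n1 + n2 + n3 + ∑_{i=4}^{M} nstar i`, the number of connected
components of `G*`. -/
theorem stmt_3 (n1 n2 n3 M : ℕ) (nstar : ℕ → ℕ) (p : ℝ) (hp : p ∈ Set.Ioc (0 : ℝ) 1) :
    let Ω := (Fin n2 → Bool) × (Fin n3 → Fin 3 → Bool)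
    let w : Ω → ℝ := fun ω =>
      (∏ i, if ω.1 i then p else 1 - p) * ∏ i, ∏ e, if ω.2 i e then p else 1 - p
    let c : Ω → Fin n3 → ℕ := fun ω i => (Finset.univ.filter (fun e => ω.2 i e = true)).card
    let n3' : Ω → ℝ := fun ω => ((Finset.univ.filter (fun i => 2 ≤ c ω i)).card : ℝ)
    let n2' : Ω → ℝ := fun ω =>
      ((Finset.univ.filter (fun i => ω.1 i = true)).card : ℝ) +
      ((Finset.univ.filter (fun i => c ω i = 1)).card : ℝ)
    let n1' : Ω → ℝ := fun ω =>
      (n1 : ℝ) + 2 * ((Finset.univ.filter (fun i => ω.1 i = false)).card : ℝ) +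
      ((Finset.univ.filter (fun i => c ω i = 1)).card : ℝ) +
      3 * ((Finset.univ.filter (fun i => c ω i = 0)).card : ℝ)
    let LSHE : Ω → ℝ := fun ω =>
      n1' ω + n2' ω * ((2 * p - 1) / p) +
      n3' ω * ((1 - 6 * (1 - p) ^ 2 * p) / (p ^ 2 * (3 - 2 * p))) +
      ∑ i ∈ Finset.Icc 4 M, (nstar i : ℝ)
    (∑ ω, w ω * LSHE ω)
      = (n1 : ℝ) + n2 + n3 + ∑ i ∈ Finset.Icc 4 M, (nstar i : ℝ) := by
  obtain ⟨hp0, hp1⟩ := hp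
  intro Ω w c n3' n2' n1' LSHE
  -- the Bernoulli measures
  set μB : Bool → ℝ := fun b => if b then p else 1 - p with hμBdef
  set μT : (Fin 3 → Bool) → ℝ := fun y => ∏ e, if y e then p else 1 - p with hμTdef
  have hμB : ∑ b, μB b = 1 := by simp [hμBdef]
  have hμT : ∑ y, μT y = 1 := by
    have h := lshe_sum_prod_pi (n := 3) (fun _ b => μB b)
    simp only [hμB, Finset.prod_const_one] at h
    exact h
  set A : (Fin n2 → Bool) → ℝ := fun x => ∏ i, μB (x i) with hAdef
  set B : (Fin n3 → Fin 3 → Bool) → ℝ := fun y => ∏ i, μT (y i) with hBdef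
  have hA : ∑ x, A x = 1 := by
    have h := lshe_sum_prod_pi (n := n2) (fun _ b => μB b)
    simp only [hμB, Finset.prod_const_one] at h
    exact h
  have hB : ∑ y, B y = 1 := by
    have h := lshe_sum_prod_pi (n := n3) (fun _ a => μT a)
    simp only [hμT, Finset.prod_const_one] at h
    exact h
  -- expectations for the 2-clique part
  have ET : ∑ x : Fin n2 → Bool, A x * ((Finset.univ.filter (fun i => x i = true)).card : ℝ)
      = n2 * p := by
    rw [hAdef, lshe_exp_count μB hμB (fun b => b = true)]
    simp [hμBdef]
  have EF : ∑ x : Fin n2 → Bool, A x * ((Finset.univ.filter (fun i => x i = false)).card : ℝ)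
      = n2 * (1 - p) := by
    rw [hAdef, lshe_exp_count μB hμB (fun b => b = false)]
    simp [hμBdef]
  -- expectations for the 3-clique part
  have EC0 : ∑ y : Fin n3 → Fin 3 → Bool,
      B y * ((Finset.univ.filter
        (fun i => (Finset.univ.filter (fun e => y i e = true)).card = 0)).card : ℝ)
      = n3 * ((1 - p) ^ 3) := by
    rw [hBdef, lshe_exp_count μT hμT
      (fun a => (Finset.univ.filter (fun e => a e = true)).card = 0)]
    congr 1
    rw [hμTdef, lshe_sum_pi3 (fun a => (∏ e, if a e then p else 1 - p) *
      (if (Finset.univ.filter (fun e => a e = true)).card = 0 then (1:ℝ) else 0))]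
    simp only [Fintype.sum_bool, Fin.prod_univ_three, Finset.card_filter, Fin.sum_univ_three,
      Matrix.cons_val_zero, Matrix.cons_val_one, Matrix.head_cons, Matrix.cons_val_two,
      Matrix.tail_cons]
    norm_num
    ring
  have EC1 : ∑ y : Fin n3 → Fin 3 → Bool,
      B y * ((Finset.univ.filter
        (fun i => (Finset.univ.filter (fun e => y i e = true)).card = 1)).card : ℝ)
      = n3 * (3 * p * (1 - p) ^ 2) := by
    rw [hBdef, lshe_exp_count μT hμT
      (fun a => (Finset.univ.filter (fun e => a e = true)).card = 1)]
    congr 1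
    rw [hμTdef, lshe_sum_pi3 (fun a => (∏ e, if a e then p else 1 - p) *
      (if (Finset.univ.filter (fun e => a e = true)).card = 1 then (1:ℝ) else 0))]
    simp only [Fintype.sum_bool, Fin.prod_univ_three, Finset.card_filter, Fin.sum_univ_three,
      Matrix.cons_val_zero, Matrix.cons_val_one, Matrix.head_cons, Matrix.cons_val_two,
      Matrix.tail_cons]
    norm_num
    ring
  have EC2 : ∑ y : Fin n3 → Fin 3 → Bool,
      B y * ((Finset.univ.filter
        (fun i => 2 ≤ (Finset.univ.filter (fun e => y i e = true)).card)).card : ℝ)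
      = n3 * (p ^ 2 * (3 - 2 * p)) := by
    rw [hBdef, lshe_exp_count μT hμT
      (fun a => 2 ≤ (Finset.univ.filter (fun e => a e = true)).card)]
    congr 1
    rw [hμTdef, lshe_sum_pi3 (fun a => (∏ e, if a e then p else 1 - p) *
      (if 2 ≤ (Finset.univ.filter (fun e => a e = true)).card then (1:ℝ) else 0))]
    simp only [Fintype.sum_bool, Fin.prod_univ_three, Finset.card_filter, Fin.sum_univ_three,
      Matrix.cons_val_zero, Matrix.cons_val_one, Matrix.head_cons, Matrix.cons_val_two,
      Matrix.tail_cons]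
    norm_num
    ring
  -- abbreviations
  set S : ℝ := ∑ i ∈ Finset.Icc 4 M, (nstar i : ℝ) with hSdef
  set al : ℝ := (2 * p - 1) / p with haldef
  set be : ℝ := (1 - 6 * (1 - p) ^ 2 * p) / (p ^ 2 * (3 - 2 * p)) with hbedef
  -- split the sum over the product space
  rw [Fintype.sum_prod_type]
  have inner : ∀ x : Fin n2 → Bool, ∑ y : Fin n3 → Fin 3 → Bool,
      w (x, y) * LSHE (x, y)
      = A x * (((n1 : ℝ) + S)
          + 2 * ((Finset.univ.filter (fun i => x i = false)).card : ℝ)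
          + al * ((Finset.univ.filter (fun i => x i = true)).card : ℝ)
          + (1 + al) * (n3 * (3 * p * (1 - p) ^ 2))
          + 3 * (n3 * ((1 - p) ^ 3))
          + be * (n3 * (p ^ 2 * (3 - 2 * p)))) := by
    intro x
    have hterm : ∀ y : Fin n3 → Fin 3 → Bool,
        w (x, y) * LSHE (x, y)
        = (A x * (((n1 : ℝ) + S)
            + 2 * ((Finset.univ.filter (fun i => x i = false)).card : ℝ)
            + al * ((Finset.univ.filter (fun i => x i = true)).card : ℝ))) * B y
          + (A x * (1 + al)) * (B y * ((Finset.univ.filter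
              (fun i => (Finset.univ.filter (fun e => y i e = true)).card = 1)).card : ℝ))
          + (A x * 3) * (B y * ((Finset.univ.filter
              (fun i => (Finset.univ.filter (fun e => y i e = true)).card = 0)).card : ℝ))
          + (A x * be) * (B y * ((Finset.univ.filter
              (fun i => 2 ≤ (Finset.univ.filter (fun e => y i e = true)).card)).card : ℝ)) := by
      intro y
      show ((∏ i, μB (x i)) * ∏ i, μT (y i)) * _ = _
      simp only [LSHE, n1', n2', n3', c]
      ring
    rw [Finset.sum_congr rfl (fun y _ => hterm y)]
    rw [Finset.sum_add_distrib, Finset.sum_add_distrib, Finset.sum_add_distrib,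
        ← Finset.mul_sum, ← Finset.mul_sum, ← Finset.mul_sum, ← Finset.mul_sum,
        hB, EC1, EC0, EC2]
    ring
  rw [Finset.sum_congr rfl (fun x _ => inner x)]
  have expand : ∀ x : Fin n2 → Bool, A x * (((n1 : ℝ) + S)
          + 2 * ((Finset.univ.filter (fun i => x i = false)).card : ℝ)
          + al * ((Finset.univ.filter (fun i => x i = true)).card : ℝ)
          + (1 + al) * (n3 * (3 * p * (1 - p) ^ 2))
          + 3 * (n3 * ((1 - p) ^ 3))
          + be * (n3 * (p ^ 2 * (3 - 2 * p))))
      = A x * (((n1 : ℝ) + S) + (1 + al) * (n3 * (3 * p * (1 - p) ^ 2))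
          + 3 * (n3 * ((1 - p) ^ 3)) + be * (n3 * (p ^ 2 * (3 - 2 * p))))
        + 2 * (A x * ((Finset.univ.filter (fun i => x i = false)).card : ℝ))
        + al * (A x * ((Finset.univ.filter (fun i => x i = true)).card : ℝ)) := by
    intro x; ring
  rw [Finset.sum_congr rfl (fun x _ => expand x)]
  rw [Finset.sum_add_distrib, Finset.sum_add_distrib,
      ← Finset.sum_mul, ← Finset.mul_sum, ← Finset.mul_sum, hA, ET, EF]
  -- now a pure algebraic identity in p
  have h3 : (3 : ℝ) - 2 * p ≠ 0 := by nlinarith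
  have hp0' : p ≠ 0 := ne_of_gt hp0
  rw [haldef, hbedef]
  field_simp
  ring
end

section
/- Under the same edge-sampling model (each edge kept independently with probability $p \in (0,1]$, cliques of size $\geq 4$ never break), the variance of the estimator $\mathrm{LSHE}$ equals $n_3^* \cdot \frac{(p-1)^2 (3p^2 - p + 1)}{p^2 (3-2p)} + n_2^* \cdot \frac{1-p}{p}$. -/
open Finset

namespace LSHEaux

noncomputable def ex {Ω : Type*} [Fintype Ω] (w f : Ω → ℝ) : ℝ := ∑ x, w x * f x

noncomputable def vr {Ω : Type*} [Fintype Ω] (w f : Ω → ℝ) : ℝ :=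
  ex w (fun x => (f x - ex w f) ^ 2)

lemma ex_comp {Ω₁ Ω₂ : Type*} [Fintype Ω₁] [Fintype Ω₂] (e : Ω₁ ≃ Ω₂)
    (w f : Ω₂ → ℝ) : ex (w ∘ e) (f ∘ e) = ex w f :=
  Equiv.sum_comp e fun x => w x * f x

lemma vr_comp {Ω₁ Ω₂ : Type*} [Fintype Ω₁] [Fintype Ω₂] (e : Ω₁ ≃ Ω₂)
    (w f : Ω₂ → ℝ) : vr (w ∘ e) (f ∘ e) = vr w f := by
  unfold vr
  rw [ex_comp]
  exact ex_comp e w (fun x => (f x - ex w f) ^ 2)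

lemma sum_center {Ω : Type*} [Fintype Ω] (w f : Ω → ℝ) (hw : ∑ x, w x = 1) :
    ∑ x, w x * (f x - ex w f) = 0 := by
  simp only [mul_sub, Finset.sum_sub_distrib, ← Finset.sum_mul, hw, ex, one_mul, sub_self]

lemma ex_prod_add {Ω₁ Ω₂ : Type*} [Fintype Ω₁] [Fintype Ω₂] (w₁ : Ω₁ → ℝ) (w₂ : Ω₂ → ℝ)
    (h₁ : ∑ a, w₁ a = 1) (h₂ : ∑ b, w₂ b = 1) (f : Ω₁ → ℝ) (g : Ω₂ → ℝ) :
    ex (fun q : Ω₁ × Ω₂ => w₁ q.1 * w₂ q.2) (fun q => f q.1 + g q.2)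
      = ex w₁ f + ex w₂ g := by
  unfold ex
  rw [Fintype.sum_prod_type]
  have key : ∀ a, ∑ b, w₁ a * w₂ b * (f a + g b) = w₁ a * f a + w₁ a * (∑ b, w₂ b * g b) := by
    intro a
    have e1 : ∀ b, w₁ a * w₂ b * (f a + g b)
        = (w₁ a * f a) * w₂ b + w₁ a * (w₂ b * g b) := fun b => by ring
    rw [Finset.sum_congr rfl fun b _ => e1 b, Finset.sum_add_distrib, ← Finset.mul_sum,
      ← Finset.mul_sum, h₂, mul_one]
  rw [Finset.sum_congr rfl fun a _ => key a, Finset.sum_add_distrib, ← Finset.sum_mul, h₁, one_mul]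

lemma vr_prod {Ω₁ Ω₂ : Type*} [Fintype Ω₁] [Fintype Ω₂] (w₁ : Ω₁ → ℝ) (w₂ : Ω₂ → ℝ)
    (h₁ : ∑ a, w₁ a = 1) (h₂ : ∑ b, w₂ b = 1) (f : Ω₁ → ℝ) (g : Ω₂ → ℝ) :
    vr (fun q : Ω₁ × Ω₂ => w₁ q.1 * w₂ q.2) (fun q => f q.1 + g q.2) = vr w₁ f + vr w₂ g := by
  have hme := ex_prod_add w₁ w₂ h₁ h₂ f g
  have key : ∀ a, ∑ b, w₁ a * w₂ b * (f a + g b - (ex w₁ f + ex w₂ g)) ^ 2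
      = w₁ a * (f a - ex w₁ f) ^ 2 + w₁ a * (∑ b, w₂ b * (g b - ex w₂ g) ^ 2) := by
    intro a
    have e1 : ∀ b, w₁ a * w₂ b * (f a + g b - (ex w₁ f + ex w₂ g)) ^ 2
        = (w₁ a * (f a - ex w₁ f) ^ 2) * w₂ b
          + (2 * w₁ a * (f a - ex w₁ f)) * (w₂ b * (g b - ex w₂ g))
          + w₁ a * (w₂ b * (g b - ex w₂ g) ^ 2) := fun b => by ring
    rw [Finset.sum_congr rfl fun b _ => e1 b, Finset.sum_add_distrib, Finset.sum_add_distrib,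
      ← Finset.mul_sum, ← Finset.mul_sum, ← Finset.mul_sum, h₂, sum_center w₂ g h₂]
    ring
  calc vr (fun q : Ω₁ × Ω₂ => w₁ q.1 * w₂ q.2) (fun q => f q.1 + g q.2)
      = ex (fun q : Ω₁ × Ω₂ => w₁ q.1 * w₂ q.2)
          (fun q => (f q.1 + g q.2 - (ex w₁ f + ex w₂ g)) ^ 2) := by
        unfold vr; rw [hme]
    _ = ∑ a, ∑ b, w₁ a * w₂ b * (f a + g b - (ex w₁ f + ex w₂ g)) ^ 2 :=
        Fintype.sum_prod_type _
    _ = ∑ a, (w₁ a * (f a - ex w₁ f) ^ 2 + w₁ a * (∑ b, w₂ b * (g b - ex w₂ g) ^ 2)) :=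
        Finset.sum_congr rfl fun a _ => key a
    _ = ∑ a, w₁ a * (f a - ex w₁ f) ^ 2 + (∑ a, w₁ a) * (∑ b, w₂ b * (g b - ex w₂ g) ^ 2) := by
        rw [Finset.sum_add_distrib, ← Finset.sum_mul]
    _ = vr w₁ f + vr w₂ g := by rw [h₁, one_mul]; rfl

lemma vr_shift {Ω : Type*} [Fintype Ω] (w : Ω → ℝ) (hw : ∑ x, w x = 1) (C : ℝ) (f : Ω → ℝ) :
    vr w (fun x => C + f x) = vr w f := by
  have hm : ex w (fun x => C + f x) = C + ex w f := by
    unfold ex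
    simp only [mul_add, Finset.sum_add_distrib, ← Finset.sum_mul, hw, one_mul]
  unfold vr
  rw [hm]
  congr 1
  funext x
  ring

lemma sum_pw {X : Type*} [Fintype X] (w : X → ℝ) (hw : ∑ x, w x = 1) :
    ∀ n : ℕ, ∑ g : Fin n → X, ∏ i, w (g i) = 1 := by
  intro n
  induction n with
  | zero => simp
  | succ n ih =>
    rw [← Equiv.sum_comp (Fin.consEquiv fun _ => X) (fun g => ∏ i, w (g i)),
      Fintype.sum_prod_type]
    have key : ∀ (x : X) (t : Fin n → X),
        (∏ i, w ((Fin.consEquiv fun _ => X) (x, t) i)) = w x * ∏ i, w (t i) := by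
      intro x t
      simp [Fin.consEquiv, Fin.prod_univ_succ]
    calc ∑ x, ∑ t : Fin n → X, ∏ i, w ((Fin.consEquiv fun _ => X) (x, t) i)
        = ∑ x, ∑ t : Fin n → X, w x * ∏ i, w (t i) := by
          exact Finset.sum_congr rfl fun x _ => Finset.sum_congr rfl fun t _ => key x t
      _ = ∑ x, w x * ∑ t : Fin n → X, ∏ i, w (t i) := by
          exact Finset.sum_congr rfl fun x _ => (Finset.mul_sum _ _ _).symm
      _ = 1 := by rw [Finset.sum_congr rfl fun x _ => by rw [ih, mul_one], hw]

lemma vr_sum_coords {X : Type*} [Fintype X] (w : X → ℝ) (hw : ∑ x, w x = 1) (f : X → ℝ) :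
    ∀ n : ℕ, vr (fun g : Fin n → X => ∏ i, w (g i)) (fun g => ∑ i, f (g i))
      = n * vr w f := by
  intro n
  induction n with
  | zero =>
    simp [vr, ex]
  | succ n ih =>
    rw [← vr_comp (Fin.consEquiv fun _ => X)]
    have hW : ((fun g : Fin (n+1) → X => ∏ i, w (g i)) ∘ (Fin.consEquiv fun _ => X))
        = fun q : X × (Fin n → X) => w q.1 * ∏ i, w (q.2 i) := by
      funext q
      simp [Fin.consEquiv, Fin.prod_univ_succ]
    have hF : ((fun g : Fin (n+1) → X => ∑ i, f (g i)) ∘ (Fin.consEquiv fun _ => X))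
        = fun q : X × (Fin n → X) => f q.1 + ∑ i, f (q.2 i) := by
      funext q
      simp [Fin.consEquiv, Fin.sum_univ_succ]
    rw [hW, hF]
    calc vr (fun q : X × (Fin n → X) => w q.1 * ∏ i, w (q.2 i))
          (fun q => f q.1 + ∑ i, f (q.2 i))
        = vr w f + vr (fun t : Fin n → X => ∏ i, w (t i)) (fun t => ∑ i, f (t i)) :=
          vr_prod w (fun t : Fin n → X => ∏ i, w (t i)) hw (sum_pw w hw n) f
            (fun t : Fin n → X => ∑ i, f (t i))
      _ = ↑(n + 1) * vr w f := by rw [ih]; push_cast; ring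

def e3 : Bool × Bool × Bool ≃ (Fin 3 → Bool) where
  toFun q := ![q.1, q.2.1, q.2.2]
  invFun g := (g 0, g 1, g 2)
  left_inv := by decide
  right_inv := by decide


noncomputable def u (p : ℝ) : Bool → ℝ := fun x => if x then p else 1 - p
noncomputable def aa (p : ℝ) : Bool → ℝ := fun x => if x then (2 * p - 1) / p else 2
def cc : (Fin 3 → Bool) → ℕ := fun g => (Finset.univ.filter (fun e => g e = true)).card
noncomputable def v (p : ℝ) : (Fin 3 → Bool) → ℝ := fun g => ∏ k, u p (g k)
noncomputable def phib (p : ℝ) : ℕ → ℝ := fun m =>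
  if 2 ≤ m then (1 - 6 * (1 - p) ^ 2 * p) / (p ^ 2 * (3 - 2 * p))
  else if m = 1 then 1 + (2 * p - 1) / p else 3
noncomputable def bb (p : ℝ) : (Fin 3 → Bool) → ℝ := fun g => phib p (cc g)

lemma hu (p : ℝ) : ∑ x, u p x = 1 := by simp [u, Fintype.sum_bool]

lemma hv (p : ℝ) : ∑ g, v p g = 1 := sum_pw (u p) (hu p) 3

lemma ex3 (p : ℝ) (φ : ℕ → ℝ) : ∑ g : Fin 3 → Bool, v p g * φ (cc g)
    = (1 - p) ^ 3 * φ 0 + (3 * p * (1 - p) ^ 2) * φ 1 + (3 * p ^ 2 * (1 - p)) * φ 2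
      + p ^ 3 * φ 3 := by
  rw [← Equiv.sum_comp e3 (fun g => v p g * φ (cc g))]
  simp only [Fintype.sum_prod_type, Fintype.sum_bool, e3, Equiv.coe_fn_mk]
  have h1 : cc ![true, true, true] = 3 := by decide
  have h2 : cc ![true, true, false] = 2 := by decide
  have h3 : cc ![true, false, true] = 2 := by decide
  have h4 : cc ![true, false, false] = 1 := by decide
  have h5 : cc ![false, true, true] = 2 := by decide
  have h6 : cc ![false, true, false] = 1 := by decide
  have h7 : cc ![false, false, true] = 1 := by decide
  have h8 : cc ![false, false, false] = 0 := by decide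
  rw [h1, h2, h3, h4, h5, h6, h7, h8]
  simp only [v, u, Fin.prod_univ_succ, Fin.prod_univ_zero, Matrix.cons_val_zero,
    Matrix.cons_val_succ, if_true, if_false, Bool.false_eq_true]
  ring

lemma exa (p : ℝ) (hp0 : p ≠ 0) : ex (u p) (aa p) = 1 := by
  simp [ex, u, aa, Fintype.sum_bool]
  field_simp
  ring

lemma vra (p : ℝ) (hp0 : p ≠ 0) : vr (u p) (aa p) = (1 - p) / p := by
  unfold vr
  rw [exa p hp0]
  simp [ex, u, aa, Fintype.sum_bool]
  field_simp
  ring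

lemma exb (p : ℝ) (hp0 : p ≠ 0) (h3 : (3 : ℝ) - 2 * p ≠ 0) : ex (v p) (bb p) = 1 := by
  have h := ex3 p (phib p)
  unfold ex bb
  rw [h]
  unfold phib
  norm_num
  field_simp
  have h3' : (3 : ℝ) - p * 2 ≠ 0 := by rw [mul_comm]; exact h3
  field_simp
  ring

lemma vrb (p : ℝ) (hp0 : p ≠ 0) (h3 : (3 : ℝ) - 2 * p ≠ 0) :
    vr (v p) (bb p) = (p - 1) ^ 2 * (3 * p ^ 2 - p + 1) / (p ^ 2 * (3 - 2 * p)) := by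
  unfold vr
  rw [exb p hp0 h3]
  have h := ex3 p (fun m => (phib p m - 1) ^ 2)
  unfold ex bb
  rw [h]
  unfold phib
  norm_num
  field_simp
  have h3' : (3 : ℝ) - p * 2 ≠ 0 := by rw [mul_comm]; exact h3
  field_simp
  ring

end LSHEaux

open LSHEaux in
set_option maxHeartbeats 400000 in
/-- Variance of the LSHE estimator in the edge-sampling model: the graph is a
disjoint union of cliques (`n1` singletons, `n2` 2-cliques, `n3` 3-cliques, and
cliques of size ≥ 4 which never break apart, contributing the constant `S` to the
estimator); each edge is kept independently with probability `p`. Then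
`Var[LSHE] = n₃ (p-1)²(3p²-p+1)/(p²(3-2p)) + n₂ (1-p)/p`. -/
theorem stmt_4 (n1 n2 n3 : ℕ) (S p : ℝ) (hS : 0 ≤ S) (hp : p ∈ Set.Ioc (0 : ℝ) 1) :
    let Ω := (Fin n2 → Bool) × (Fin n3 → Fin 3 → Bool)
    let w : Ω → ℝ := fun ω =>
      (∏ i, if ω.1 i then p else 1 - p) * ∏ i, ∏ e, if ω.2 i e then p else 1 - p
    -- number of surviving edges of the i-th 3-clique
    let c : Ω → Fin n3 → ℕ := fun ω i => (Finset.univ.filter (fun e => ω.2 i e = true)).card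
    let n3' : Ω → ℝ := fun ω => ((Finset.univ.filter (fun i => 2 ≤ c ω i)).card : ℝ)
    let n2' : Ω → ℝ := fun ω =>
      ((Finset.univ.filter (fun i => ω.1 i = true)).card : ℝ) +
      ((Finset.univ.filter (fun i => c ω i = 1)).card : ℝ)
    let n1' : Ω → ℝ := fun ω =>
      (n1 : ℝ) + 2 * ((Finset.univ.filter (fun i => ω.1 i = false)).card : ℝ) +
      ((Finset.univ.filter (fun i => c ω i = 1)).card : ℝ) +
      3 * ((Finset.univ.filter (fun i => c ω i = 0)).card : ℝ)
    let LSHE : Ω → ℝ := fun ω =>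
      n1' ω + n2' ω * ((2 * p - 1) / p) +
      n3' ω * ((1 - 6 * (1 - p) ^ 2 * p) / (p ^ 2 * (3 - 2 * p))) + S
    (∑ ω, w ω * (LSHE ω - ∑ ω', w ω' * LSHE ω') ^ 2)
      = n3 * ((p - 1) ^ 2 * (3 * p ^ 2 - p + 1) / (p ^ 2 * (3 - 2 * p)))
        + n2 * ((1 - p) / p) := by
  intro Ω w c n3' n2' n1' LSHE
  obtain ⟨hp0, hp1⟩ := hp
  have hpne : p ≠ 0 := ne_of_gt hp0
  have h3ne : (3 : ℝ) - 2 * p ≠ 0 := by nlinarith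
  have hw1 : ∑ α : Fin n2 → Bool, ∏ i, u p (α i) = 1 := sum_pw (u p) (hu p) n2
  have hw2 : ∑ β : Fin n3 → Fin 3 → Bool, ∏ i, v p (β i) = 1 := sum_pw (v p) (hv p) n3
  have hwsum : ∑ q : (Fin n2 → Bool) × (Fin n3 → Fin 3 → Bool),
      (∏ i, u p (q.1 i)) * (∏ i, v p (q.2 i)) = 1 := by
    rw [Fintype.sum_prod_type]
    calc ∑ α : Fin n2 → Bool, ∑ β : Fin n3 → Fin 3 → Bool,
          (∏ i, u p (α i)) * (∏ i, v p (β i))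
        = ∑ α : Fin n2 → Bool, (∏ i, u p (α i)) * ∑ β : Fin n3 → Fin 3 → Bool,
            (∏ i, v p (β i)) :=
          Finset.sum_congr rfl fun α _ => (Finset.mul_sum _ _ _).symm
      _ = 1 := by rw [Finset.sum_congr rfl fun α _ => by rw [hw2, mul_one], hw1]
  have hL : ∀ ω : Ω, LSHE ω
      = ((n1 : ℝ) + S) + ((∑ i, aa p (ω.1 i)) + (∑ i, bb p (ω.2 i))) := by
    intro ω
    have hA : 2 * ((Finset.univ.filter (fun i => ω.1 i = false)).card : ℝ)
        + ((Finset.univ.filter (fun i => ω.1 i = true)).card : ℝ) * ((2 * p - 1) / p)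
        = ∑ i, aa p (ω.1 i) := by
      rw [Finset.card_filter, Finset.card_filter]
      push_cast
      rw [Finset.mul_sum, Finset.sum_mul, ← Finset.sum_add_distrib]
      refine Finset.sum_congr rfl fun i _ => ?_
      cases h : ω.1 i <;> simp [aa, h]
    have hB : ((Finset.univ.filter (fun i => cc (ω.2 i) = 1)).card : ℝ)
        + 3 * ((Finset.univ.filter (fun i => cc (ω.2 i) = 0)).card : ℝ)
        + ((Finset.univ.filter (fun i => cc (ω.2 i) = 1)).card : ℝ) * ((2 * p - 1) / p)
        + ((Finset.univ.filter (fun i => 2 ≤ cc (ω.2 i))).card : ℝ)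
            * ((1 - 6 * (1 - p) ^ 2 * p) / (p ^ 2 * (3 - 2 * p)))
        = ∑ i, bb p (ω.2 i) := by
      rw [Finset.card_filter, Finset.card_filter, Finset.card_filter]
      push_cast
      rw [Finset.mul_sum, Finset.sum_mul, Finset.sum_mul, ← Finset.sum_add_distrib,
        ← Finset.sum_add_distrib, ← Finset.sum_add_distrib]
      refine Finset.sum_congr rfl fun i _ => ?_
      unfold bb phib
      set m := cc (ω.2 i) with hm
      rcases Nat.lt_or_ge m 2 with h | h
      · interval_cases m <;> norm_num
      · have e1 : m ≠ 1 := by omega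
        have e0 : m ≠ 0 := by omega
        simp only [h, e0, e1, if_true, if_false]
        ring
    show (n1 : ℝ) + 2 * ((Finset.univ.filter (fun i => ω.1 i = false)).card : ℝ)
        + ((Finset.univ.filter (fun i => cc (ω.2 i) = 1)).card : ℝ)
        + 3 * ((Finset.univ.filter (fun i => cc (ω.2 i) = 0)).card : ℝ)
        + (((Finset.univ.filter (fun i => ω.1 i = true)).card : ℝ)
            + ((Finset.univ.filter (fun i => cc (ω.2 i) = 1)).card : ℝ)) * ((2 * p - 1) / p)
        + ((Finset.univ.filter (fun i => 2 ≤ cc (ω.2 i))).card : ℝ)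
            * ((1 - 6 * (1 - p) ^ 2 * p) / (p ^ 2 * (3 - 2 * p)))
        + S
        = ((n1 : ℝ) + S) + ((∑ i, aa p (ω.1 i)) + (∑ i, bb p (ω.2 i)))
    rw [← hA, ← hB]
    ring
  have hLSHE : LSHE = fun ω : Ω =>
      ((n1 : ℝ) + S) + ((∑ i, aa p (ω.1 i)) + (∑ i, bb p (ω.2 i))) := funext hL
  calc (∑ ω, w ω * (LSHE ω - ∑ ω', w ω' * LSHE ω') ^ 2) = vr w LSHE := rfl
    _ = vr w (fun ω : Ω => ((n1 : ℝ) + S)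
          + ((∑ i, aa p (ω.1 i)) + (∑ i, bb p (ω.2 i)))) := by rw [hLSHE]
    _ = vr w (fun ω : Ω => (∑ i, aa p (ω.1 i)) + (∑ i, bb p (ω.2 i))) :=
        vr_shift w hwsum _ _
    _ = vr (fun α : Fin n2 → Bool => ∏ i, u p (α i)) (fun α => ∑ i, aa p (α i))
        + vr (fun β : Fin n3 → Fin 3 → Bool => ∏ i, v p (β i)) (fun β => ∑ i, bb p (β i)) :=
        vr_prod (fun α : Fin n2 → Bool => ∏ i, u p (α i))
          (fun β : Fin n3 → Fin 3 → Bool => ∏ i, v p (β i)) hw1 hw2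
          (fun α : Fin n2 → Bool => ∑ i, aa p (α i))
          (fun β : Fin n3 → Fin 3 → Bool => ∑ i, bb p (β i))
    _ = n2 * vr (u p) (aa p) + n3 * vr (v p) (bb p) := by
        rw [vr_sum_coords (u p) (hu p) (aa p) n2, vr_sum_coords (v p) (hv p) (bb p) n3]
    _ = n3 * ((p - 1) ^ 2 * (3 * p ^ 2 - p + 1) / (p ^ 2 * (3 - 2 * p)))
        + n2 * ((1 - p) / p) := by
        rw [vra p hpne, vrb p hpne h3ne]
        ring
end

section
/- The function $V(p) = a \cdot \frac{(p-1)^2 (3p^2 - p + 1)}{p^2 (3-2p)} + b \cdot \frac{1-p}{p}$, for fixed nonnegative constants $a, b$ (not both zero), is monotonically decreasing in $p$ on the interval $(0,1]$. -/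
private lemma keyQ (x y : ℝ) (hx : 0 < x) (hxy : x < y) (hy : y ≤ 1) :
    0 < 3*y-2*y^2+3*x-11*x*y+6*x*y^2-2*x^2+6*x^2*y+9*x^2*y^2-9*x^2*y^3-9*x^3*y^2+6*x^3*y^3 := by
  have hy0 : 0 < y := hx.trans hxy
  have hx1 : x < 1 := hxy.trans_le hy
  nlinarith [mul_pos hx hy0, sq_nonneg (x-y), mul_pos (mul_pos hx hy0) (mul_pos hx hy0), mul_nonneg (sub_nonneg.2 hy) hx.le, mul_nonneg (mul_nonneg (sub_nonneg.2 hy) hx.le) hy0.le, mul_pos (sub_pos.2 hx1) hy0, mul_nonneg (mul_nonneg (sub_pos.2 hx1).le (sub_nonneg.2 hy)) (mul_pos hx hy0).le, sq_nonneg (x*y-1), sq_nonneg (x+y-2), mul_pos hx hx, mul_pos hy0 hy0]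

private lemma keyA (x y : ℝ) (hx : 0 < x) (hxy : x < y) (hy : y ≤ 1) :
    (y - 1) ^ 2 * (3 * y ^ 2 - y + 1) / (y ^ 2 * (3 - 2 * y))
      < (x - 1) ^ 2 * (3 * x ^ 2 - x + 1) / (x ^ 2 * (3 - 2 * x)) := by
  have hy0 : 0 < y := hx.trans hxy
  have hdx : 0 < x ^ 2 * (3 - 2 * x) := by nlinarith [sq_nonneg x, mul_pos hx hx]
  have hdy : 0 < y ^ 2 * (3 - 2 * y) := by nlinarith [mul_pos hy0 hy0]
  rw [div_lt_div_iff₀ hdy hdx]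
  have hQ := keyQ x y hx hxy hy
  nlinarith [mul_pos (sub_pos.2 hxy) hQ]

private lemma keyB (x y : ℝ) (hx : 0 < x) (hxy : x < y) :
    (1 - y) / y < (1 - x) / x := by
  have hy0 : 0 < y := hx.trans hxy
  rw [div_lt_div_iff₀ hy0 hx]
  nlinarith

/-- The LSHE variance function is strictly decreasing on `(0, 1]` when the
nonnegative coefficients are not both zero. -/
theorem stmt_5 (a b : ℝ) (ha : 0 ≤ a) (hb : 0 ≤ b) (hab : ¬(a = 0 ∧ b = 0)) :
    StrictAntiOn
      (fun p : ℝ => a * ((p - 1) ^ 2 * (3 * p ^ 2 - p + 1) / (p ^ 2 * (3 - 2 * p)))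
        + b * ((1 - p) / p))
      (Set.Ioc (0 : ℝ) 1) := by
  intro x hx y hy hxy
  simp only
  have hA := keyA x y hx.1 hxy hy.2
  have hB := keyB x y hx.1 hxy
  rcases ha.lt_or_eq with ha' | ha'
  · have h1 : a * ((y - 1) ^ 2 * (3 * y ^ 2 - y + 1) / (y ^ 2 * (3 - 2 * y)))
        < a * ((x - 1) ^ 2 * (3 * x ^ 2 - x + 1) / (x ^ 2 * (3 - 2 * x))) :=
      mul_lt_mul_of_pos_left hA ha'
    have h2 : b * ((1 - y) / y) ≤ b * ((1 - x) / x) :=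
      mul_le_mul_of_nonneg_left hB.le hb
    linarith
  · have hb' : 0 < b := by
      rcases hb.lt_or_eq with h | h
      · exact h
      · exact absurd ⟨ha'.symm, h.symm⟩ hab
    have h2 : b * ((1 - y) / y) < b * ((1 - x) / x) :=
      mul_lt_mul_of_pos_left hB hb'
    rw [← ha']
    linarith
end

section
/- For minwise hashing: let $\pi$ be a uniformly random permutation of a finite universe $U$, and let $S_1, S_2 \subseteq U$ be nonempty sets. Then $\Pr[\min \pi(S_1) = \min \pi(S_2)] = \frac{|S_1 \cap S_2|}{|S_1 \cup S_2|}$. -/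
open Finset

/-- Minwise hashing collision probability: for a uniformly random permutation `π` of a
finite linearly ordered universe `U` and nonempty sets `S1, S2 ⊆ U`, the probability
that `min π(S1) = min π(S2)` equals the Jaccard similarity `|S1 ∩ S2| / |S1 ∪ S2|`. -/
theorem stmt_10 (U : Type) [Fintype U] [LinearOrder U] [DecidableEq U]
    (S1 S2 : Finset U) (h1 : S1.Nonempty) (h2 : S2.Nonempty) :
    ((Finset.univ.filter (fun π : Equiv.Perm U =>
        (S1.image π).min' (h1.image π) = (S2.image π).min' (h2.image π))).card : ℝ)
      / ((Finset.univ : Finset (Equiv.Perm U)).card : ℝ)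
    = ((S1 ∩ S2).card : ℝ) / ((S1 ∪ S2).card : ℝ) := by
  classical
  set A : Finset U := S1 ∪ S2 with hA
  have hAne : A.Nonempty := h1.mono Finset.subset_union_left
  set f : Equiv.Perm U → U := fun π => π.symm ((A.image π).min' (hAne.image π)) with hf
  have hπf : ∀ π : Equiv.Perm U, π (f π) = (A.image π).min' (hAne.image π) := fun π =>
    Equiv.apply_symm_apply π _
  have hfA : ∀ π : Equiv.Perm U, f π ∈ A := by
    intro π
    obtain ⟨a, ha, hae⟩ := Finset.mem_image.1 (Finset.min'_mem (A.image π) (hAne.image π))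
    have : f π = a := by simp [hf, ← hae]
    rw [this]; exact ha
  have key : ∀ (S : Finset U) (hS : S.Nonempty), S ⊆ A → ∀ π : Equiv.Perm U,
      ((S.image π).min' (hS.image π) = (A.image π).min' (hAne.image π) ↔ f π ∈ S) := by
    intro S hS hSA π
    constructor
    · intro h
      obtain ⟨a, ha, hae⟩ := Finset.mem_image.1 (Finset.min'_mem (S.image π) (hS.image π))
      have : a = f π := by
        apply π.injective
        rw [hae, hπf, ← h]
      rwa [← this]
    · intro h
      apply le_antisymm
      · exact Finset.min'_le _ _ (by rw [← hπf π]; exact Finset.mem_image_of_mem _ h)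
      · exact Finset.min'_le _ _ (Finset.image_subset_image hSA (Finset.min'_mem _ _))
  have hiff : ∀ π : Equiv.Perm U,
      ((S1.image π).min' (h1.image π) = (S2.image π).min' (h2.image π)) ↔ f π ∈ S1 ∩ S2 := by
    intro π
    constructor
    · intro h
      have hmem : (A.image π).min' (hAne.image π) ∈ S1.image π ∨
          (A.image π).min' (hAne.image π) ∈ S2.image π := by
        obtain ⟨x, hx, hxe⟩ := Finset.mem_image.1 (Finset.min'_mem (A.image π) (hAne.image π))
        rw [hA, Finset.mem_union] at hx
        exact hx.imp (fun h => hxe ▸ Finset.mem_image_of_mem _ h)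
          (fun h => hxe ▸ Finset.mem_image_of_mem _ h)
      have h1' : (S1.image π).min' (h1.image π) = (A.image π).min' (hAne.image π) := by
        apply le_antisymm
        · rcases hmem with hm | hm
          · exact Finset.min'_le _ _ hm
          · rw [h]; exact Finset.min'_le _ _ hm
        · exact Finset.min'_le _ _
            (Finset.image_subset_image Finset.subset_union_left (Finset.min'_mem _ _))
      have h2' : (S2.image π).min' (h2.image π) = (A.image π).min' (hAne.image π) := by
        rw [← h]; exact h1'
      exact Finset.mem_inter.2 ⟨(key S1 h1 Finset.subset_union_left π).1 h1',
        (key S2 h2 Finset.subset_union_right π).1 h2'⟩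
    · intro h
      rw [(key S1 h1 Finset.subset_union_left π).2 (Finset.mem_inter.1 h).1,
        (key S2 h2 Finset.subset_union_right π).2 (Finset.mem_inter.1 h).2]
  -- fibers of f over A all have the same cardinality
  have fiber_eq : ∀ a ∈ A, ∀ b ∈ A,
      (Finset.univ.filter (fun π : Equiv.Perm U => f π = a)).card
        = (Finset.univ.filter (fun π : Equiv.Perm U => f π = b)).card := by
    intro a ha b hb
    have hswapA : ∀ x ∈ A, Equiv.swap a b x ∈ A := by
      intro x hx
      rcases eq_or_ne x a with rfl | hxa
      · rw [Equiv.swap_apply_left]; exact hb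
      rcases eq_or_ne x b with rfl | hxb
      · rw [Equiv.swap_apply_right]; exact ha
      · rw [Equiv.swap_apply_of_ne_of_ne hxa hxb]; exact hx
    have himg : A.image (Equiv.swap a b) = A := by
      apply Finset.eq_of_subset_of_card_le
      · intro x hx; obtain ⟨y, hy, rfl⟩ := Finset.mem_image.1 hx; exact hswapA y hy
      · rw [Finset.card_image_of_injective _ (Equiv.injective _)]
    have hfswap : ∀ π : Equiv.Perm U, f (π * Equiv.swap a b) = Equiv.swap a b (f π) := by
      intro π
      have himg2 : A.image ⇑(π * Equiv.swap a b) = A.image ⇑π := by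
        rw [Equiv.Perm.coe_mul, ← Finset.image_image, himg]
      apply (π * Equiv.swap a b).injective
      rw [hπf]
      have h3 : (π * Equiv.swap a b) (Equiv.swap a b (f π)) = π (f π) := by
        simp [Equiv.Perm.mul_apply]
      rw [h3, hπf]
      simp only [himg2]
    apply Finset.card_bij' (fun π _ => π * Equiv.swap a b) (fun π _ => π * Equiv.swap a b)
    · intro π hπ
      rw [Finset.mem_filter] at hπ ⊢
      refine ⟨Finset.mem_univ _, ?_⟩
      rw [hfswap, hπ.2, Equiv.swap_apply_left]
    · intro π hπ
      rw [Finset.mem_filter] at hπ ⊢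
      refine ⟨Finset.mem_univ _, ?_⟩
      rw [hfswap, hπ.2, Equiv.swap_apply_right]
    · intro π _
      rw [mul_assoc, Equiv.swap_mul_self, mul_one]
    · intro π _
      rw [mul_assoc, Equiv.swap_mul_self, mul_one]
  obtain ⟨a0, ha0⟩ := hAne
  set c : ℕ := (Finset.univ.filter (fun π : Equiv.Perm U => f π = a0)).card with hc
  -- total count
  have htotal : (Finset.univ : Finset (Equiv.Perm U)).card = A.card * c := by
    rw [Finset.card_eq_sum_card_fiberwise (fun π _ => hfA π)]
    rw [Finset.sum_congr rfl (fun a ha => fiber_eq a ha a0 ha0)]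
    simp [mul_comm, hc]
  -- event count
  have hevent : (Finset.univ.filter (fun π : Equiv.Perm U =>
        (S1.image π).min' (h1.image π) = (S2.image π).min' (h2.image π))).card
      = (S1 ∩ S2).card * c := by
    have heq : (Finset.univ.filter (fun π : Equiv.Perm U =>
        (S1.image π).min' (h1.image π) = (S2.image π).min' (h2.image π)))
        = Finset.univ.filter (fun π => f π ∈ S1 ∩ S2) := by
      apply Finset.filter_congr
      intro π _
      exact hiff π
    rw [heq]
    rw [Finset.card_eq_sum_card_fiberwise
      (s := Finset.univ.filter (fun π => f π ∈ S1 ∩ S2)) (f := f) (t := S1 ∩ S2) (fun π hπ => (Finset.mem_filter.1 hπ).2)]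
    have hterm : ∀ a ∈ S1 ∩ S2,
        ((Finset.univ.filter (fun π : Equiv.Perm U => f π ∈ S1 ∩ S2)).filter
          (fun π => f π = a)).card = c := by
      intro a ha
      have : (Finset.univ.filter (fun π : Equiv.Perm U => f π ∈ S1 ∩ S2)).filter
          (fun π => f π = a) = Finset.univ.filter (fun π : Equiv.Perm U => f π = a) := by
        rw [Finset.filter_filter]
        apply Finset.filter_congr
        intro π _
        constructor
        · exact fun h => h.2
        · exact fun h => ⟨h ▸ ha, h⟩
      rw [this]
      have haA : a ∈ A := by
        rw [hA]
        exact Finset.mem_union_left _ (Finset.mem_inter.1 ha).1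
      exact fiber_eq a haA a0 ha0
    rw [Finset.sum_congr rfl hterm]
    simp [mul_comm]
  -- c is positive
  have hcpos : 0 < c := by
    have hne : (Finset.univ : Finset (Equiv.Perm U)).card ≠ 0 :=
      Finset.card_ne_zero_of_mem (Finset.mem_univ (1 : Equiv.Perm U))
    exact Nat.pos_of_ne_zero (fun h0 => hne (by rw [htotal, h0, mul_zero]))
  rw [htotal, hevent]
  have hcR : (c : ℝ) ≠ 0 := Nat.cast_ne_zero.2 hcpos.ne'
  push_cast
  rw [mul_div_mul_right _ _ hcR]
end

section
/- Minwise hashing is a locality sensitive family for Jaccard similarity: if $x_1, x_2, y_1, y_2$ are nonempty finite subsets of a universe $U$ with $J(x_1, x_2) \geq J(y_1, y_2)$, then for a uniformly random permutation $\pi$ of $U$, $\Pr[\min\pi(x_1) = \min\pi(x_2)] \geq \Pr[\min\pi(y_1) = \min\pi(y_2)]$. -/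
open Finset

namespace MinHashAux

set_option linter.unusedSectionVars false

variable {U : Type} [Fintype U] [LinearOrder U] [DecidableEq U]

/-- the preimage of the minimum of `π` over `S`. -/
def argmin (S : Finset U) (hS : S.Nonempty) (π : Equiv.Perm U) : U :=
  π.symm ((S.image π).min' (hS.image π))

lemma argmin_mem (S : Finset U) (hS : S.Nonempty) (π : Equiv.Perm U) :
    argmin S hS π ∈ S := by
  obtain ⟨w, hw, hw'⟩ := mem_image.mp ((S.image π).min'_mem (hS.image π))
  simpa [argmin, ← hw'] using hw

lemma apply_argmin (S : Finset U) (hS : S.Nonempty) (π : Equiv.Perm U) :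
    π (argmin S hS π) = (S.image π).min' (hS.image π) := by
  simp [argmin]

lemma image_swap (S : Finset U) {u v : U} (hu : u ∈ S) (hv : v ∈ S) :
    S.image (Equiv.swap u v) = S := by
  ext x
  simp only [Finset.mem_image]
  constructor
  · rintro ⟨w, hw, rfl⟩
    rw [Equiv.swap_apply_def]
    split_ifs <;> simp_all
  · intro hx
    refine ⟨Equiv.swap u v x, ?_, Equiv.swap_apply_self u v x⟩
    rw [Equiv.swap_apply_def]
    split_ifs <;> simp_all

lemma argmin_swap (S : Finset U) (hS : S.Nonempty) (π : Equiv.Perm U)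
    {u v : U} (hu : u ∈ S) (hv : v ∈ S) :
    argmin S hS ((Equiv.swap u v).trans π) = Equiv.swap u v (argmin S hS π) := by
  have h0 : S.image (⇑((Equiv.swap u v).trans π)) = (S.image (Equiv.swap u v)).image π := by
    rw [Finset.image_image]; rfl
  have himg : S.image (⇑((Equiv.swap u v).trans π)) = S.image π := by
    rw [h0, image_swap S hu hv]
  unfold argmin
  have hmin : ((S.image ((Equiv.swap u v).trans π)).min' (hS.image _))
      = ((S.image π).min' (hS.image π)) := by
    congr 1
  rw [hmin]
  simp [Equiv.symm_trans_apply, Equiv.symm_swap]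

lemma fiber_card (S : Finset U) (hS : S.Nonempty) {u v : U} (hu : u ∈ S) (hv : v ∈ S) :
    (univ.filter (fun π : Equiv.Perm U => argmin S hS π = u)).card =
    (univ.filter (fun π : Equiv.Perm U => argmin S hS π = v)).card := by
  apply Finset.card_bij' (fun π _ => (Equiv.swap u v).trans π)
    (fun π _ => (Equiv.swap u v).trans π)
  · intro π hπ
    simp only [mem_filter, mem_univ, true_and] at hπ ⊢
    rw [argmin_swap S hS π hu hv, hπ, Equiv.swap_apply_left]
  · intro π hπ
    simp only [mem_filter, mem_univ, true_and] at hπ ⊢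
    rw [argmin_swap S hS π hu hv, hπ, Equiv.swap_apply_right]
  · intro π _
    ext x; simp [Equiv.swap_apply_self]
  · intro π _
    ext x; simp [Equiv.swap_apply_self]

lemma cond_iff (A B : Finset U) (hA : A.Nonempty) (hB : B.Nonempty) (π : Equiv.Perm U) :
    ((A.image π).min' (hA.image π) = (B.image π).min' (hB.image π)) ↔
    argmin (A ∪ B) (hA.mono subset_union_left) π ∈ A ∩ B := by
  have hU : (A ∪ B).Nonempty := hA.mono subset_union_left
  set m := ((A ∪ B).image π).min' (hU.image π) with hm
  set a := (A.image π).min' (hA.image π) with ha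
  set b := (B.image π).min' (hB.image π) with hb
  have harg : argmin (A ∪ B) (hA.mono subset_union_left) π = π.symm m := rfl
  rw [harg]
  have hma : m ≤ a := min'_le _ _ (by
    have := (A.image π).min'_mem (hA.image π)
    exact (Finset.image_subset_image subset_union_left) this)
  have hmb : m ≤ b := min'_le _ _ (by
    have := (B.image π).min'_mem (hB.image π)
    exact (Finset.image_subset_image subset_union_right) this)
  have hmemA : a ∈ A.image π := (A.image π).min'_mem (hA.image π)
  have hmemB : b ∈ B.image π := (B.image π).min'_mem (hB.image π)
  have hmem : m ∈ A.image π ∪ B.image π := by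
    rw [← Finset.image_union]
    exact ((A ∪ B).image π).min'_mem (hU.image π)
  have hminle : ∀ x ∈ A.image π, a ≤ x := fun x hx => min'_le _ _ hx
  have hminleB : ∀ x ∈ B.image π, b ≤ x := fun x hx => min'_le _ _ hx
  clear_value m a b
  constructor
  · intro hab
    subst hab
    have ham : a ≤ m := by
      rcases Finset.mem_union.mp hmem with h | h
      · exact hminle _ h
      · exact hminleB _ h
    have heq : m = a := le_antisymm hma ham
    subst heq
    rw [mem_inter]
    constructor
    · obtain ⟨w, hw, hw'⟩ := mem_image.mp hmemA
      simpa [← hw'] using hw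
    · obtain ⟨w, hw, hw'⟩ := mem_image.mp hmemB
      simpa [← hw'] using hw
  · intro h
    rw [mem_inter] at h
    have hpm : π (π.symm m) = m := π.apply_symm_apply m
    have h1 : m ∈ A.image π := mem_image.mpr ⟨_, h.1, hpm⟩
    have h2 : m ∈ B.image π := mem_image.mpr ⟨_, h.2, hpm⟩
    have haa : a = m := le_antisymm (hminle _ h1) hma
    have hbb : b = m := le_antisymm (hminleB _ h2) hmb
    exact haa.trans hbb.symm

lemma key (A B : Finset U) (hA : A.Nonempty) (hB : B.Nonempty) :
    ((univ.filter (fun π : Equiv.Perm U =>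
        (A.image π).min' (hA.image π) = (B.image π).min' (hB.image π))).card : ℝ)
      / ((univ : Finset (Equiv.Perm U)).card : ℝ)
    = ((A ∩ B).card : ℝ) / ((A ∪ B).card : ℝ) := by
  have hU : (A ∪ B).Nonempty := hA.mono subset_union_left
  obtain ⟨u0, hu0⟩ := id hU
  set c := (univ.filter (fun π : Equiv.Perm U => argmin (A ∪ B) hU π = u0)).card with hc
  have hfib : ∀ u ∈ A ∪ B,
      (univ.filter (fun π : Equiv.Perm U => argmin (A ∪ B) hU π = u)).card = c :=
    fun u hu => fiber_card (A ∪ B) hU hu hu0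
  have htot : ((univ : Finset (Equiv.Perm U)).card) = (A ∪ B).card * c := by
    rw [Finset.card_eq_sum_card_fiberwise (f := argmin (A ∪ B) hU) (t := A ∪ B)
      (fun π _ => argmin_mem _ _ _)]
    rw [Finset.sum_congr rfl hfib, Finset.sum_const, smul_eq_mul]
  have hfilt : (univ.filter (fun π : Equiv.Perm U =>
      (A.image π).min' (hA.image π) = (B.image π).min' (hB.image π))).card
      = (A ∩ B).card * c := by
    have hset : (univ.filter (fun π : Equiv.Perm U =>
        (A.image π).min' (hA.image π) = (B.image π).min' (hB.image π)))
        = univ.filter (fun π : Equiv.Perm U => argmin (A ∪ B) hU π ∈ A ∩ B) := by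
      apply filter_congr
      intro π _
      exact cond_iff A B hA hB π
    rw [hset]
    rw [Finset.card_eq_sum_card_fiberwise (f := argmin (A ∪ B) hU) (t := A ∩ B)
      (s := univ.filter (fun π : Equiv.Perm U => argmin (A ∪ B) hU π ∈ A ∩ B))
      (fun π hπ => (mem_filter.mp hπ).2)]
    have hsum : ∀ u ∈ A ∩ B,
        ((univ.filter (fun π : Equiv.Perm U => argmin (A ∪ B) hU π ∈ A ∩ B)).filter
          (fun π => argmin (A ∪ B) hU π = u)).card = c := by
      intro u hu
      have h1 : ((univ.filter (fun π : Equiv.Perm U => argmin (A ∪ B) hU π ∈ A ∩ B)).filter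
          (fun π => argmin (A ∪ B) hU π = u))
          = univ.filter (fun π : Equiv.Perm U => argmin (A ∪ B) hU π = u) := by
        rw [Finset.filter_filter]
        apply filter_congr
        intro π _
        constructor
        · exact fun h => h.2
        · exact fun h => ⟨h ▸ hu, h⟩
      rw [h1]
      exact hfib u (mem_union.mpr (Or.inl (mem_inter.mp hu).1))
    rw [Finset.sum_congr rfl hsum, Finset.sum_const, smul_eq_mul]
  have hc0 : c ≠ 0 := by
    intro h
    have hpos : 0 < (univ : Finset (Equiv.Perm U)).card :=
      Finset.card_pos.mpr ⟨1, mem_univ 1⟩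
    rw [htot, h, mul_zero] at hpos
    exact lt_irrefl 0 hpos
  have hUc : ((A ∪ B).card : ℝ) ≠ 0 := by
    exact_mod_cast Finset.card_ne_zero_of_mem hu0
  have hcR : (c : ℝ) ≠ 0 := by exact_mod_cast hc0
  rw [hfilt, htot]
  push_cast
  field_simp

end MinHashAux

open Finset

/-- Minwise hashing is a locality sensitive family for Jaccard similarity: if
`J(x1,x2) ≥ J(y1,y2)` then the probability (over a uniformly random permutation `π`)
that `min π(x1) = min π(x2)` is at least the probability that `min π(y1) = min π(y2)`. -/
theorem stmt_11 (U : Type) [Fintype U] [LinearOrder U] [DecidableEq U]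
    (x1 x2 y1 y2 : Finset U)
    (hx1 : x1.Nonempty) (hx2 : x2.Nonempty) (hy1 : y1.Nonempty) (hy2 : y2.Nonempty)
    (hJ : ((y1 ∩ y2).card : ℝ) / ((y1 ∪ y2).card : ℝ)
          ≤ ((x1 ∩ x2).card : ℝ) / ((x1 ∪ x2).card : ℝ)) :
    ((Finset.univ.filter (fun π : Equiv.Perm U =>
        (y1.image π).min' (hy1.image π) = (y2.image π).min' (hy2.image π))).card : ℝ)
      / ((Finset.univ : Finset (Equiv.Perm U)).card : ℝ)
    ≤ ((Finset.univ.filter (fun π : Equiv.Perm U =>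
        (x1.image π).min' (hx1.image π) = (x2.image π).min' (hx2.image π))).card : ℝ)
      / ((Finset.univ : Finset (Equiv.Perm U)).card : ℝ) := by
  rw [MinHashAux.key y1 y2 hy1 hy2, MinHashAux.key x1 x2 hx1 hx2]
  exact hJ
end

section
/- In the edge-sampling model with probability $p \in (0,1]$, the expected number of observed singletons satisfies $\mathbb{E}[n_1'] = n_1^* + 2 n_2^*(1-p) + 3 n_3^*(1-p)^2$, assuming cliques of size $\geq 4$ contribute no singletons. -/
lemma stmt13_prodsum {α β : Type} [Fintype α] [DecidableEq α] [Fintype β] (g : α → β → ℝ) :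
    ∑ f : α → β, ∏ i, g i (f i) = ∏ i, ∑ b, g i b := by
  rw [Finset.prod_univ_sum]
  simp [Fintype.piFinset_univ]

lemma stmt13_coord {α β : Type} [Fintype α] [DecidableEq α] [Fintype β] (g : α → β → ℝ)
    (h : β → ℝ) (i0 : α) :
    ∑ f : α → β, (∏ i, g i (f i)) * h (f i0)
      = (∑ b, g i0 b * h b) * ∏ i ∈ Finset.univ.erase i0, ∑ b, g i b := by
  have key : ∀ f : α → β,
      (∏ i, g i (f i)) * h (f i0)
        = ∏ i, (g i (f i) * if i = i0 then h (f i) else 1) := by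
    intro f
    rw [Finset.prod_mul_distrib, Finset.prod_ite_eq' Finset.univ i0 (fun i => h (f i))]
    simp
  simp only [key]
  rw [stmt13_prodsum (fun i b => g i b * if i = i0 then h b else 1)]
  rw [← Finset.mul_prod_erase Finset.univ _ (Finset.mem_univ i0)]
  simp only [if_pos rfl]
  congr 1
  refine Finset.prod_congr rfl fun i hi => ?_
  have : i ≠ i0 := (Finset.mem_erase.mp hi).1
  simp [this]

lemma stmt13_w3one (p : ℝ) :
    ∑ h : Fin 3 → Bool, ∏ e, (if h e then p else 1 - p) = 1 := by
  rw [stmt13_prodsum (fun (_ : Fin 3) (v : Bool) => if v then p else 1 - p)]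
  simp

lemma stmt13_ind1 (b : Fin 3 → Bool) :
    (if (Finset.univ.filter (fun e => b e = true)).card = 1 then (1:ℝ) else 0)
      = ∑ e0 : Fin 3, ∏ e : Fin 3,
          (if e = e0 then (if b e then (1:ℝ) else 0) else (if b e then 0 else 1)) := by
  simp only [Finset.card_filter, Fin.sum_univ_three, Fin.prod_univ_three]
  rcases hb0 : b 0 <;> rcases hb1 : b 1 <;> rcases hb2 : b 2 <;>
    norm_num [show (1:Fin 3) ≠ 2 by decide, show (2:Fin 3) ≠ 1 by decide,
      show (0:Fin 3) ≠ 2 by decide, show (2:Fin 3) ≠ 0 by decide,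
      show (0:Fin 3) ≠ 1 by decide, show (1:Fin 3) ≠ 0 by decide]

lemma stmt13_ind0 (b : Fin 3 → Bool) :
    (if (Finset.univ.filter (fun e => b e = true)).card = 0 then (1:ℝ) else 0)
      = ∏ e : Fin 3, (if b e then (0:ℝ) else 1) := by
  simp only [Finset.card_filter, Fin.sum_univ_three, Fin.prod_univ_three]
  rcases hb0 : b 0 <;> rcases hb1 : b 1 <;> rcases hb2 : b 2 <;> norm_num

lemma stmt13_c1 (p : ℝ) :
    ∑ b : Fin 3 → Bool, (∏ e, if b e then p else 1 - p) *
      (if (Finset.univ.filter (fun e => b e = true)).card = 1 then (1:ℝ) else 0)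
    = 3 * (p * (1 - p) ^ 2) := by
  simp only [stmt13_ind1, Finset.mul_sum]
  rw [Finset.sum_comm]
  have key : ∀ e0 : Fin 3,
      ∑ b : Fin 3 → Bool, (∏ e, if b e then p else 1 - p) *
        ∏ e : Fin 3, (if e = e0 then (if b e then (1:ℝ) else 0) else (if b e then 0 else 1))
      = ∏ e : Fin 3, (if e = e0 then p else 1 - p) := by
    intro e0
    have h := stmt13_prodsum (fun (e : Fin 3) (v : Bool) =>
      (if v then p else 1 - p) * (if e = e0 then (if v then (1:ℝ) else 0) else (if v then 0 else 1)))
    simp only [← Finset.prod_mul_distrib] at h ⊢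
    rw [h]
    refine Finset.prod_congr rfl fun e _ => ?_
    rcases eq_or_ne e e0 with h | h <;> simp [h]
  rw [Finset.sum_congr rfl fun e0 _ => key e0]
  norm_num [Fin.sum_univ_three, Fin.prod_univ_three,
    show (1:Fin 3) ≠ 0 by decide, show (2:Fin 3) ≠ 0 by decide,
    show (0:Fin 3) ≠ 1 by decide, show (2:Fin 3) ≠ 1 by decide,
    show (0:Fin 3) ≠ 2 by decide, show (1:Fin 3) ≠ 2 by decide]
  ring

lemma stmt13_c0 (p : ℝ) :
    ∑ b : Fin 3 → Bool, (∏ e, if b e then p else 1 - p) *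
      (if (Finset.univ.filter (fun e => b e = true)).card = 0 then (1:ℝ) else 0)
    = (1 - p) ^ 3 := by
  simp only [stmt13_ind0, ← Finset.prod_mul_distrib]
  rw [stmt13_prodsum (fun (e : Fin 3) (v : Bool) =>
    (if v then p else 1 - p) * (if v then (0:ℝ) else 1))]
  simp [Fin.prod_univ_three]

lemma stmt13_W2sum (n2 : ℕ) (p : ℝ) :
    ∑ a : Fin n2 → Bool, ∏ i, (if a i then p else 1 - p) = 1 := by
  rw [stmt13_prodsum (fun (_ : Fin n2) (v : Bool) => if v then p else 1 - p)]
  simp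

lemma stmt13_W3sum (n3 : ℕ) (p : ℝ) :
    ∑ b : Fin n3 → Fin 3 → Bool, ∏ i, ∏ e, (if b i e then p else 1 - p) = 1 := by
  rw [stmt13_prodsum (fun (_ : Fin n3) (h : Fin 3 → Bool) => ∏ e, if h e then p else 1 - p)]
  simp [stmt13_w3one]

lemma stmt13_B (n2 : ℕ) (p : ℝ) :
    ∑ a : Fin n2 → Bool, (∏ i, if a i then p else 1 - p) *
      ((Finset.univ.filter (fun i => a i = false)).card : ℝ) = n2 * (1 - p) := by
  have hcast : ∀ a : Fin n2 → Bool,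
      (((Finset.univ.filter (fun i => a i = false)).card : ℝ))
        = ∑ i : Fin n2, (if a i = false then (1:ℝ) else 0) := by
    intro a; rw [Finset.card_filter]; push_cast; rfl
  simp only [hcast, Finset.mul_sum]
  rw [Finset.sum_comm]
  have key : ∀ i0 : Fin n2,
      ∑ a : Fin n2 → Bool, (∏ i, if a i then p else 1 - p) *
        (if a i0 = false then (1:ℝ) else 0) = 1 - p := by
    intro i0
    rw [stmt13_coord (fun (_ : Fin n2) (v : Bool) => if v then p else 1 - p)
      (fun v => if v = false then (1:ℝ) else 0) i0]
    simp
  rw [Finset.sum_congr rfl fun i _ => key i]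
  simp [mul_comm]
  ring

lemma stmt13_C (n3 : ℕ) (p : ℝ) (c : ℕ) (v : ℝ)
    (hv : ∑ h : Fin 3 → Bool, (∏ e, if h e then p else 1 - p) *
      (if (Finset.univ.filter (fun e => h e = true)).card = c then (1:ℝ) else 0) = v) :
    ∑ b : Fin n3 → Fin 3 → Bool, (∏ i, ∏ e, if b i e then p else 1 - p) *
      ((Finset.univ.filter
        (fun i => (Finset.univ.filter (fun e => b i e = true)).card = c)).card : ℝ)
    = n3 * v := by
  have hcast : ∀ b : Fin n3 → Fin 3 → Bool,
      (((Finset.univ.filter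
        (fun i => (Finset.univ.filter (fun e => b i e = true)).card = c)).card : ℝ))
        = ∑ i : Fin n3,
            (if (Finset.univ.filter (fun e => b i e = true)).card = c then (1:ℝ) else 0) := by
    intro b; rw [Finset.card_filter]; push_cast; rfl
  simp only [hcast, Finset.mul_sum]
  rw [Finset.sum_comm]
  have key : ∀ i0 : Fin n3,
      ∑ b : Fin n3 → Fin 3 → Bool, (∏ i, ∏ e, if b i e then p else 1 - p) *
        (if (Finset.univ.filter (fun e => b i0 e = true)).card = c then (1:ℝ) else 0) = v := by
    intro i0
    rw [stmt13_coord (fun (_ : Fin n3) (h : Fin 3 → Bool) => ∏ e, if h e then p else 1 - p)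
      (fun h => if (Finset.univ.filter (fun e => h e = true)).card = c then (1:ℝ) else 0) i0]
    rw [hv]
    simp [stmt13_w3one]
  rw [Finset.sum_congr rfl fun i _ => key i]
  simp [mul_comm]

/-- Expected number of observed singletons under independent edge sampling with
probability `p` on a disjoint union of cliques (`n1` singletons, `n2` 2-cliques,
`n3` 3-cliques; cliques of size ≥ 4 contribute no singletons):
`E[n₁'] = n₁ + 2 n₂ (1-p) + 3 n₃ (1-p)²`. A true singleton stays a singleton; a
2-clique yields 2 singletons iff its edge dies; a 3-clique yields 1 singleton iff
exactly one of its edges survives and 3 singletons iff none survives. -/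
theorem stmt_13 (n1 n2 n3 : ℕ) (p : ℝ) (hp : p ∈ Set.Ioc (0 : ℝ) 1) :
    let w : (Fin n2 → Bool) × (Fin n3 → Fin 3 → Bool) → ℝ := fun ω =>
      (∏ i, if ω.1 i then p else 1 - p) * ∏ i, ∏ e, if ω.2 i e then p else 1 - p
    let n1' : (Fin n2 → Bool) × (Fin n3 → Fin 3 → Bool) → ℝ := fun ω =>
      (n1 : ℝ) + 2 * ((Finset.univ.filter (fun i => ω.1 i = false)).card : ℝ) +
      ((Finset.univ.filter
          (fun i => (Finset.univ.filter (fun e => ω.2 i e = true)).card = 1)).card : ℝ) +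
      3 * ((Finset.univ.filter
          (fun i => (Finset.univ.filter (fun e => ω.2 i e = true)).card = 0)).card : ℝ)
    (∑ ω, w ω * n1' ω) = n1 + 2 * n2 * (1 - p) + 3 * n3 * (1 - p) ^ 2 := by
  intro w n1'
  simp only [w, n1']
  rw [Fintype.sum_prod_type]
  have expand : ∀ (a : Fin n2 → Bool) (b : Fin n3 → Fin 3 → Bool),
      ((∏ i, if a i then p else 1 - p) * ∏ i, ∏ e, if b i e then p else 1 - p) *
        ((n1 : ℝ) + 2 * ((Finset.univ.filter (fun i => a i = false)).card : ℝ) +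
          ((Finset.univ.filter
            (fun i => (Finset.univ.filter (fun e => b i e = true)).card = 1)).card : ℝ) +
          3 * ((Finset.univ.filter
            (fun i => (Finset.univ.filter (fun e => b i e = true)).card = 0)).card : ℝ))
      = ((n1 : ℝ) * (∏ i, if a i then p else 1 - p)) * (∏ i, ∏ e, if b i e then p else 1 - p)
        + (2 * ((∏ i, if a i then p else 1 - p) *
            ((Finset.univ.filter (fun i => a i = false)).card : ℝ)))
            * (∏ i, ∏ e, if b i e then p else 1 - p)
        + (∏ i, if a i then p else 1 - p) *
            ((∏ i, ∏ e, if b i e then p else 1 - p) *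
              ((Finset.univ.filter
                (fun i => (Finset.univ.filter (fun e => b i e = true)).card = 1)).card : ℝ))
        + (∏ i, if a i then p else 1 - p) *
            (3 * ((∏ i, ∏ e, if b i e then p else 1 - p) *
              ((Finset.univ.filter
                (fun i => (Finset.univ.filter (fun e => b i e = true)).card = 0)).card : ℝ))) := by
    intro a b; ring
  simp only [expand, Finset.sum_add_distrib]
  rw [← Finset.sum_mul_sum, ← Finset.sum_mul_sum, ← Finset.sum_mul_sum, ← Finset.sum_mul_sum]
  simp only [← Finset.mul_sum]
  rw [stmt13_W2sum, stmt13_W3sum, stmt13_B, stmt13_C n3 p 1 _ (stmt13_c1 p),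
    stmt13_C n3 p 0 _ (stmt13_c0 p)]
  ring
end

section
/- For any $p \in (0,1]$ and nonnegative integers $a = n_3^*$, $b = n_2^*$: if $V_{\mathrm{adaptive}}(p)$ denotes the LSHE variance $a \frac{(p-1)^2(3p^2-p+1)}{p^2(3-2p)} + b \frac{1-p}{p}$ and $q \in (0, p)$, then $V_{\mathrm{adaptive}}(p) \leq V_{\mathrm{adaptive}}(q)$, i.e., a sampler achieving higher edge-inclusion probability yields an estimator with no larger variance. -/
set_option maxHeartbeats 1000000 in
lemma aux_G_nonneg (p q : ℝ) (hp0 : 0 < p) (hp1 : p ≤ 1) (hq0 : 0 < q) (hqp : q < p) :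
    0 ≤ 3*q - 2*q^2 + 3*p - 11*p*q + 6*p*q^2 - 2*p^2 + 6*p^2*q + 9*p^2*q^2
        - 9*p^2*q^3 - 9*p^3*q^2 + 6*p^3*q^3 := by
  have hq1 : q < 1 := lt_of_lt_of_le hqp hp1
  nlinarith [mul_pos hp0 hq0, sq_nonneg (p-q), mul_nonneg (sub_nonneg.2 hp1) (sub_nonneg.2 hq1.le),
    mul_nonneg (mul_nonneg hp0.le hq0.le) (sub_nonneg.2 hp1),
    mul_nonneg (mul_nonneg hp0.le hq0.le) (sub_nonneg.2 hq1.le),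
    mul_nonneg (mul_nonneg (mul_pos hp0 hq0).le (sub_nonneg.2 hp1)) (sub_nonneg.2 hq1.le),
    mul_nonneg (mul_nonneg (mul_nonneg (mul_pos hp0 hq0).le (mul_pos hp0 hq0).le) (sub_nonneg.2 hp1)) (sub_nonneg.2 hq1.le),
    sq_nonneg (p*q - 1), sq_nonneg (p*q*(1-q)), sq_nonneg (p*q*(1-p))]

lemma aux_term1 (p q : ℝ) (hp0 : 0 < p) (hp1 : p ≤ 1) (hq0 : 0 < q) (hqp : q < p) :
    (p - 1) ^ 2 * (3 * p ^ 2 - p + 1) / (p ^ 2 * (3 - 2 * p))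
      ≤ (q - 1) ^ 2 * (3 * q ^ 2 - q + 1) / (q ^ 2 * (3 - 2 * q)) := by
  have hq1 : q < 1 := lt_of_lt_of_le hqp hp1
  have hdp : 0 < p ^ 2 * (3 - 2 * p) := by nlinarith
  have hdq : 0 < q ^ 2 * (3 - 2 * q) := by nlinarith
  rw [div_le_div_iff₀ hdp hdq]
  have hG := aux_G_nonneg p q hp0 hp1 hq0 hqp
  have hpq : 0 ≤ p - q := sub_nonneg.2 hqp.le
  nlinarith [mul_nonneg hpq hG]

/-- Higher edge-inclusion probability yields no larger variance for the LSH estimator. -/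
theorem stmt_18 (a b : ℕ) (p q : ℝ) (hp : p ∈ Set.Ioc (0 : ℝ) 1) (hq : q ∈ Set.Ioo (0 : ℝ) p) :
    (a : ℝ) * ((p - 1) ^ 2 * (3 * p ^ 2 - p + 1) / (p ^ 2 * (3 - 2 * p)))
        + (b : ℝ) * ((1 - p) / p)
      ≤ (a : ℝ) * ((q - 1) ^ 2 * (3 * q ^ 2 - q + 1) / (q ^ 2 * (3 - 2 * q)))
        + (b : ℝ) * ((1 - q) / q) := by
  obtain ⟨hp0, hp1⟩ := hp
  obtain ⟨hq0, hqp⟩ := hq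
  have h1 := aux_term1 p q hp0 hp1 hq0 hqp
  have h2 : (1 - p) / p ≤ (1 - q) / q := by
    rw [div_le_div_iff₀ hp0 hq0]; nlinarith
  have ha : (0:ℝ) ≤ a := Nat.cast_nonneg a
  have hb : (0:ℝ) ≤ b := Nat.cast_nonneg b
  exact add_le_add (mul_le_mul_of_nonneg_left h1 ha) (mul_le_mul_of_nonneg_left h2 hb)
end
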